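/- Let a ≤ b be integers, σ_x > 0, and σ_{h_a},…,σ_{h_b} > 0. Let H_k, H'_k, X_k, X'_k (k = a,…,b) be mutually independent real random variables with H_k, H'_k ~ N(0, σ_{h_k}²/2) and X_k, X'_k ~ N(0, σ_x²/2). Then the characteristic function of V = Σ_{k=a}^{b} (H_k·X_k − H'_k·X'_k) is E[exp(i t V)] = ∏_{k=a}^{b} (1 + σ_{h_k}²·σ_x²·t²/4)^{−1} for every real t. (Equation (36) of the paper.) -/

import Mathlib

open MeasureTheory ProbabilityTheory Complex
open scoped NNReal ENNReal


section Helpers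

lemma integral_gaussianReal_complex (v : ℝ≥0) (hv : v ≠ 0) (g : ℝ → ℂ) :
    ∫ x, g x ∂(gaussianReal 0 v) = ∫ x, (gaussianPDFReal 0 v x : ℂ) * g x := by
  rw [gaussianReal_of_var_ne_zero _ hv]
  have hm : Measurable fun x => (gaussianPDFReal 0 v x).toNNReal :=
    (measurable_gaussianPDFReal 0 v).real_toNNReal
  have : (gaussianPDF 0 v) = fun x => ((fun x => (gaussianPDFReal 0 v x).toNNReal) x : ℝ≥0∞) := by
    ext x; simp [gaussianPDF, ENNReal.ofReal]
  rw [this, integral_withDensity_eq_integral_smul hm g]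
  congr 1; ext x
  rw [NNReal.smul_def, Real.coe_toNNReal _ (gaussianPDFReal_nonneg 0 v x)]
  simp [Complex.real_smul]

lemma aux_quad (v : ℝ≥0) (hv : v ≠ 0) (c : ℂ) :
    ∫ x, (gaussianPDFReal 0 v x : ℂ) * Complex.exp (c * x) =
      ((Real.sqrt (2 * Real.pi * v))⁻¹ : ℂ) *
        ((Real.pi / (1 / (2 * (v:ℝ)))) ^ (1/2 : ℂ) * Complex.exp (0 - c^2 / (4 * ((-(1/(2*(v:ℝ)))) : ℂ)))) := by
  have hvpos : (0:ℝ) < v := lt_of_le_of_ne v.coe_nonneg (by exact_mod_cast (Ne.symm hv))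
  have hvC : ((v:ℝ):ℂ) ≠ 0 := by exact_mod_cast hvpos.ne'
  have hb : ((((-(1/(2*(v:ℝ)))) : ℝ) : ℂ)).re < 0 := by
    simp; positivity
  have h1 : ∀ x : ℝ, (gaussianPDFReal 0 v x : ℂ) * Complex.exp (c * x) =
      ((Real.sqrt (2 * Real.pi * v))⁻¹ : ℂ) *
        Complex.exp ((((-(1/(2*(v:ℝ)))) : ℝ) : ℂ) * x^2 + c * x + 0) := by
    intro x
    rw [gaussianPDFReal_def]
    push_cast
    rw [mul_assoc, ← Complex.exp_add]
    congr 2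
    field_simp
    ring
  simp_rw [h1, integral_const_mul]
  rw [integral_cexp_quadratic hb c 0]
  congr 3
  simp [Complex.ofReal_neg, Complex.ofReal_div, Complex.ofReal_mul]
  norm_num

lemma gauss_sqrt_cpow (w : ℝ) (hw : 0 < w) : ((w:ℂ)) ^ (1/2 : ℂ) = (Real.sqrt w : ℂ) := by
  rw [show (1/2 : ℂ) = ((1/2 : ℝ) : ℂ) by norm_num, ← Complex.ofReal_cpow hw.le,
    ← Real.sqrt_eq_rpow]

lemma charFun_gauss (v : ℝ≥0) (hv : v ≠ 0) (s : ℝ) :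
    ∫ x, Complex.exp (Complex.I * s * x) ∂(gaussianReal 0 v) =
      ((Real.exp (-((v:ℝ) * s^2 / 2)) : ℝ) : ℂ) := by
  have hvpos : (0:ℝ) < v := lt_of_le_of_ne v.coe_nonneg (by exact_mod_cast (Ne.symm hv))
  rw [integral_gaussianReal_complex v hv]
  rw [aux_quad v hv (Complex.I * (s:ℂ))]
  have h2 : (Real.pi : ℂ) / (1/(2*((v:ℝ):ℂ))) = ((2*Real.pi*(v:ℝ) : ℝ):ℂ) := by
    have hvC : ((v:ℝ):ℂ) ≠ 0 := by exact_mod_cast hvpos.ne'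
    push_cast
    field_simp
  rw [h2, gauss_sqrt_cpow _ (by positivity)]
  rw [show (0 - (Complex.I * s)^2 / (4 * ((-(1/(2*(v:ℝ)))) : ℂ))) = ((-((v:ℝ) * s^2 / 2) : ℝ) : ℂ) by
    have : ((v:ℝ):ℂ) ≠ 0 := by exact_mod_cast hvpos.ne'
    field_simp
    ring_nf
    simp [Complex.I_sq]
    ring]
  rw [← mul_assoc, inv_mul_cancel₀
    (by exact_mod_cast (by positivity : Real.sqrt (2*Real.pi*(v:ℝ)) ≠ 0) : ((Real.sqrt (2*Real.pi*(v:ℝ)):ℝ):ℂ) ≠ 0), one_mul]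
  exact (Complex.ofReal_exp _).symm

lemma laplace_sq_gauss (v : ℝ≥0) (hv : v ≠ 0) (r : ℝ) (hr : 0 ≤ r) :
    ∫ x, ((Real.exp (-(r * x^2)) : ℝ) : ℂ) ∂(gaussianReal 0 v) =
      (((Real.sqrt (1 + 2 * v * r))⁻¹ : ℝ) : ℂ) := by
  have hvpos : (0:ℝ) < v := lt_of_le_of_ne v.coe_nonneg (by exact_mod_cast (Ne.symm hv))
  have hvC : ((v:ℝ):ℂ) ≠ 0 := by exact_mod_cast hvpos.ne'
  rw [integral_gaussianReal_complex v hv]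
  have hb : ((((-(1/(2*(v:ℝ)) + r)) : ℝ) : ℂ)).re < 0 := by
    simp only [Complex.ofReal_re]
    have : (0:ℝ) < 1/(2*(v:ℝ)) := by positivity
    linarith
  have h1 : ∀ x : ℝ, (gaussianPDFReal 0 v x : ℂ) * ((Real.exp (-(r * x^2)) : ℝ) : ℂ) =
      ((Real.sqrt (2 * Real.pi * v))⁻¹ : ℂ) *
        Complex.exp ((((-(1/(2*(v:ℝ)) + r)) : ℝ) : ℂ) * x^2 + 0 * x + 0) := by
    intro x
    rw [gaussianPDFReal_def]
    push_cast
    rw [mul_assoc, ← Complex.exp_add]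
    congr 2
    field_simp
    ring
  simp_rw [h1, integral_const_mul]
  rw [integral_cexp_quadratic hb 0 0]
  have h2 : Real.pi / -((((-(1/(2*(v:ℝ)) + r)) : ℝ) : ℂ)) = (((2 * Real.pi * v) / (1 + 2 * v * r) : ℝ) : ℂ) := by
    push_cast
    field_simp
  have h3 : (0:ℂ) - 0^2 / (4 * (((-(1/(2*(v:ℝ)) + r)) : ℝ) : ℂ)) = 0 := by
    simp
  rw [h3, Complex.exp_zero, mul_one, h2, gauss_sqrt_cpow _ (by positivity)]
  have hA : (0:ℝ) < 2*Real.pi*(v:ℝ) := by positivity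
  have hB : (0:ℝ) < 1 + 2*(v:ℝ)*r := by positivity
  rw [Real.sqrt_div hA.le]
  norm_cast
  rw [div_eq_mul_inv, ← mul_assoc,
    inv_mul_cancel₀ (by positivity : Real.sqrt (2*Real.pi*(v:ℝ)) ≠ 0), one_mul]

variable {Ω : Type*} [MeasureSpace Ω] [IsProbabilityMeasure (ℙ : Measure Ω)]

lemma indep_integral_mul_comp {β β' : Type*} [MeasurableSpace β] [MeasurableSpace β']
    {f : Ω → β} {g : Ω → β'} (hf : Measurable f) (hg : Measurable g)
    (h : IndepFun f g ℙ) {φ : β → ℂ} {ψ : β' → ℂ} (hφ : Measurable φ) (hψ : Measurable ψ) :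
    ∫ ω, φ (f ω) * ψ (g ω) ∂ℙ = (∫ ω, φ (f ω) ∂ℙ) * ∫ ω, ψ (g ω) ∂ℙ := by
  have hmap := (indepFun_iff_map_prod_eq_prod_map_map hf.aemeasurable hg.aemeasurable).1 h
  have hpair : Measurable (fun ω => (f ω, g ω)) := hf.prodMk hg
  haveI : IsProbabilityMeasure (Measure.map f ℙ) := Measure.isProbabilityMeasure_map hf.aemeasurable
  haveI : IsProbabilityMeasure (Measure.map g ℙ) := Measure.isProbabilityMeasure_map hg.aemeasurable
  calc ∫ ω, φ (f ω) * ψ (g ω) ∂ℙ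
      = ∫ z : β × β', φ z.1 * ψ z.2 ∂(Measure.map (fun ω => (f ω, g ω)) ℙ) := by
        have hm2 : Measurable fun z : β × β' => φ z.1 * ψ z.2 := by fun_prop
        rw [integral_map hpair.aemeasurable hm2.aestronglyMeasurable]
    _ = ∫ z : β × β', φ z.1 * ψ z.2 ∂((Measure.map f ℙ).prod (Measure.map g ℙ)) := by rw [hmap]
    _ = (∫ x, φ x ∂(Measure.map f ℙ)) * ∫ y, ψ y ∂(Measure.map g ℙ) := integral_prod_mul _ _
    _ = _ := by
        rw [integral_map hf.aemeasurable hφ.aestronglyMeasurable,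
          integral_map hg.aemeasurable hψ.aestronglyMeasurable]

lemma int_exp_pair (vh vx : ℝ≥0) (hvh : vh ≠ 0) (hvx : vx ≠ 0)
    (Hf Xf : Ω → ℝ) (mH : Measurable Hf) (mX : Measurable Xf)
    (lH : Measure.map Hf ℙ = gaussianReal 0 vh) (lX : Measure.map Xf ℙ = gaussianReal 0 vx)
    (hind : IndepFun Hf Xf ℙ) (t : ℝ) :
    ∫ ω, Complex.exp (Complex.I * t * (Hf ω * Xf ω : ℝ)) ∂ℙ =
      (((Real.sqrt (1 + (vh:ℝ) * (vx:ℝ) * t^2))⁻¹ : ℝ) : ℂ) := by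
  have hmap := (indepFun_iff_map_prod_eq_prod_map_map mH.aemeasurable mX.aemeasurable).1 hind
  rw [lH, lX] at hmap
  have hpair : Measurable (fun ω => (Hf ω, Xf ω)) := mH.prodMk mX
  have hFm : Measurable (fun z : ℝ × ℝ => Complex.exp (Complex.I * t * (z.1 * z.2 : ℝ))) := by
    fun_prop
  have h1 : ∫ ω, Complex.exp (Complex.I * t * (Hf ω * Xf ω : ℝ)) ∂ℙ
      = ∫ z : ℝ × ℝ, Complex.exp (Complex.I * t * (z.1 * z.2 : ℝ))
          ∂((gaussianReal 0 vh).prod (gaussianReal 0 vx)) := by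
    rw [← hmap, integral_map hpair.aemeasurable hFm.aestronglyMeasurable]
  rw [h1]
  have hint : Integrable (fun z : ℝ × ℝ => Complex.exp (Complex.I * t * (z.1 * z.2 : ℝ)))
      ((gaussianReal 0 vh).prod (gaussianReal 0 vx)) := by
    refine Integrable.mono' (integrable_const 1) hFm.aestronglyMeasurable (ae_of_all _ ?_)
    intro z
    simp [Complex.norm_exp]
  rw [integral_prod _ hint]
  have h2 : ∀ x : ℝ, (∫ y, Complex.exp (Complex.I * t * (x * y : ℝ)) ∂(gaussianReal 0 vx))
      = ((Real.exp (-((vx:ℝ) * t^2 / 2 * x^2)) : ℝ) : ℂ) := by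
    intro x
    have : ∀ y : ℝ, Complex.I * t * ((x * y : ℝ) : ℂ) = Complex.I * ((t * x : ℝ) : ℂ) * y := by
      intro y; push_cast; ring
    simp_rw [this, charFun_gauss vx hvx (t * x)]
    norm_num
    ring_nf
  simp_rw [h2]
  have h3 : ∀ x : ℝ, ((Real.exp (-((vx:ℝ) * t^2 / 2 * x^2)) : ℝ) : ℂ)
      = ((Real.exp (-(((vx:ℝ) * t^2 / 2) * x^2)) : ℝ) : ℂ) := fun x => rfl
  rw [show (fun x : ℝ => ((Real.exp (-((vx:ℝ) * t^2 / 2 * x^2)) : ℝ) : ℂ))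
      = fun x : ℝ => ((Real.exp (-(((vx:ℝ) * t^2 / 2) * x^2)) : ℝ) : ℂ) from rfl]
  rw [laplace_sq_gauss vh hvh ((vx:ℝ) * t^2 / 2) (by positivity)]
  norm_num
  congr 1
  ring

lemma factor_k (vh vx : ℝ≥0) (hvh : vh ≠ 0) (hvx : vx ≠ 0)
    (Hf H'f Xf X'f : Ω → ℝ)
    (mH : Measurable Hf) (mH' : Measurable H'f) (mX : Measurable Xf) (mX' : Measurable X'f)
    (lH : Measure.map Hf ℙ = gaussianReal 0 vh) (lH' : Measure.map H'f ℙ = gaussianReal 0 vh)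
    (lX : Measure.map Xf ℙ = gaussianReal 0 vx) (lX' : Measure.map X'f ℙ = gaussianReal 0 vx)
    (hpair : IndepFun (fun ω => (Hf ω, Xf ω)) (fun ω => (H'f ω, X'f ω)) ℙ)
    (hHX : IndepFun Hf Xf ℙ) (hH'X' : IndepFun H'f X'f ℙ) (t : ℝ) :
    ∫ ω, Complex.exp (Complex.I * t * ((Hf ω * Xf ω - H'f ω * X'f ω : ℝ) : ℂ)) ∂ℙ =
      (((1 + (vh:ℝ) * (vx:ℝ) * t^2)⁻¹ : ℝ) : ℂ) := by
  have hsplit : ∀ ω, Complex.exp (Complex.I * t * ((Hf ω * Xf ω - H'f ω * X'f ω : ℝ) : ℂ))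
      = (fun z : ℝ × ℝ => Complex.exp (Complex.I * t * (z.1 * z.2 : ℝ))) (Hf ω, Xf ω) *
        (fun z : ℝ × ℝ => Complex.exp (Complex.I * (-t : ℝ) * (z.1 * z.2 : ℝ))) (H'f ω, X'f ω) := by
    intro ω
    simp only [← Complex.exp_add]
    congr 1
    push_cast
    ring
  simp_rw [hsplit]
  have h0 := indep_integral_mul_comp (mH.prodMk mX) (mH'.prodMk mX') hpair
    (φ := fun z : ℝ×ℝ => Complex.exp (Complex.I * t * (z.1*z.2 : ℝ)))
    (ψ := fun z : ℝ×ℝ => Complex.exp (Complex.I * ((-t : ℝ):ℂ) * (z.1*z.2 : ℝ)))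
    (by fun_prop) (by fun_prop)
  simp only at h0
  rw [h0]
  rw [int_exp_pair vh vx hvh hvx Hf Xf mH mX lH lX hHX t,
    int_exp_pair vh vx hvh hvx H'f X'f mH' mX' lH' lX' hH'X' (-t)]
  rw [← Complex.ofReal_mul]
  congr 1
  rw [neg_pow, show ((-1:ℝ)^2) = 1 by norm_num, one_mul, ← mul_inv]
  rw [Real.mul_self_sqrt (by positivity)]

end Helpers

/-- Equation (36) of the paper: the characteristic function of
`V = ∑_{k=a}^{b} (H_k·X_k − H'_k·X'_k)`, where all the `H_k, H'_k ~ N(0, σ_{h_k}²/2)` and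
`X_k, X'_k ~ N(0, σ_x²/2)` are mutually independent, is
`E[exp(i t V)] = ∏_{k=a}^{b} (1 + σ_{h_k}²·σ_x²·t²/4)⁻¹`. -/

theorem charFun_sum_gaussian_products
    {Ω : Type*} [MeasureSpace Ω] [IsProbabilityMeasure (ℙ : Measure Ω)]
    (a b : ℤ) (hab : a ≤ b)
    (σx : ℝ) (hσx : 0 < σx)
    (σh : ℤ → ℝ) (hσh : ∀ k ∈ Finset.Icc a b, 0 < σh k)
    (H H' X X' : ℤ → Ω → ℝ)
    (hHm : ∀ k ∈ Finset.Icc a b, Measurable (H k))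
    (hH'm : ∀ k ∈ Finset.Icc a b, Measurable (H' k))
    (hXm : ∀ k ∈ Finset.Icc a b, Measurable (X k))
    (hX'm : ∀ k ∈ Finset.Icc a b, Measurable (X' k))
    (hHlaw : ∀ k ∈ Finset.Icc a b,
      Measure.map (H k) ℙ = gaussianReal 0 (Real.toNNReal (σh k ^ 2 / 2)))
    (hH'law : ∀ k ∈ Finset.Icc a b,
      Measure.map (H' k) ℙ = gaussianReal 0 (Real.toNNReal (σh k ^ 2 / 2)))
    (hXlaw : ∀ k ∈ Finset.Icc a b,
      Measure.map (X k) ℙ = gaussianReal 0 (Real.toNNReal (σx ^ 2 / 2)))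
    (hX'law : ∀ k ∈ Finset.Icc a b,
      Measure.map (X' k) ℙ = gaussianReal 0 (Real.toNNReal (σx ^ 2 / 2)))
    -- mutual independence of all the variables H_k, H'_k, X_k, X'_k, k = a,…,b
    (hindep : iIndepFun
      (fun p : (Finset.Icc a b) × Fin 4 => ![H, H', X, X'] p.2 (p.1 : ℤ)) ℙ) :
    ∀ t : ℝ,
      ∫ ω, Complex.exp (Complex.I * (t : ℂ) *
          ((∑ k ∈ Finset.Icc a b, (H k ω * X k ω - H' k ω * X' k ω) : ℝ) : ℂ)) ∂ℙ
        = ((∏ k ∈ Finset.Icc a b, (1 + σh k ^ 2 * σx ^ 2 * t ^ 2 / 4)⁻¹ : ℝ) : ℂ) := by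
  intro t
  classical
  have hZm : ∀ p : (Finset.Icc a b) × Fin 4, Measurable (![H, H', X, X'] p.2 (p.1 : ℤ)) := by
    rintro ⟨k, i⟩
    fin_cases i
    · exact hHm k k.2
    · exact hH'm k k.2
    · exact hXm k k.2
    · exact hX'm k k.2
  set F : (Finset.Icc a b) → Ω → ℝ :=
    fun k ω => H (k:ℤ) ω * X (k:ℤ) ω - H' (k:ℤ) ω * X' (k:ℤ) ω with hF
  have hFm : ∀ k, Measurable (F k) :=
    fun k => ((hHm k k.2).mul (hXm k k.2)).sub ((hH'm k k.2).mul (hX'm k k.2))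
  have hfac : ∀ k : (Finset.Icc a b),
      ∫ ω, Complex.exp (Complex.I * t * ((F k ω : ℝ) : ℂ)) ∂ℙ
        = (((1 + σh (k:ℤ) ^ 2 * σx ^ 2 * t ^ 2 / 4)⁻¹ : ℝ) : ℂ) := by
    intro k
    have hσhk := hσh k k.2
    have hvh : (Real.toNNReal (σh (k:ℤ) ^ 2 / 2)) ≠ 0 :=
      (Real.toNNReal_pos.mpr (by positivity)).ne'
    have hvx : (Real.toNNReal (σx ^ 2 / 2)) ≠ 0 :=
      (Real.toNNReal_pos.mpr (by positivity)).ne'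
    have hpairk : IndepFun (fun ω => (H (k:ℤ) ω, X (k:ℤ) ω))
        (fun ω => (H' (k:ℤ) ω, X' (k:ℤ) ω)) ℙ := by
      exact hindep.indepFun_prodMk_prodMk hZm (k,0) (k,2) (k,1) (k,3)
        (by simp) (by simp) (by simp) (by simp)
    have hHXk : IndepFun (H (k:ℤ)) (X (k:ℤ)) ℙ :=
      hindep.indepFun (i := (k,0)) (j := (k,2)) (by simp)
    have hH'X'k : IndepFun (H' (k:ℤ)) (X' (k:ℤ)) ℙ :=
      hindep.indepFun (i := (k,1)) (j := (k,3)) (by simp)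
    rw [factor_k (Real.toNNReal (σh (k:ℤ) ^ 2 / 2)) (Real.toNNReal (σx ^ 2 / 2)) hvh hvx
      (H (k:ℤ)) (H' (k:ℤ)) (X (k:ℤ)) (X' (k:ℤ))
      (hHm k k.2) (hH'm k k.2) (hXm k k.2) (hX'm k k.2)
      (hHlaw k k.2) (hH'law k k.2) (hXlaw k k.2) (hX'law k k.2)
      hpairk hHXk hH'X'k t]
    congr 2
    rw [Real.coe_toNNReal _ (by positivity), Real.coe_toNNReal _ (by positivity)]
    ring
  have key : ∀ S : Finset (Finset.Icc a b),
      ∫ ω, Complex.exp (Complex.I * t * ((∑ k ∈ S, F k ω : ℝ) : ℂ)) ∂ℙ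
        = ((∏ k ∈ S, (1 + σh (k:ℤ) ^ 2 * σx ^ 2 * t ^ 2 / 4)⁻¹ : ℝ) : ℂ) := by
    intro S
    induction S using Finset.induction_on with
    | empty => simp
    | insert j S hj ih =>
      have hgm : Measurable (fun ω => ∑ k ∈ S, F k ω) :=
        Finset.measurable_sum S (fun k _ => hFm k)
      -- independence of `F j` and the partial sum
      have hdisj : Disjoint (({j} : Finset (Finset.Icc a b)) ×ˢ (Finset.univ : Finset (Fin 4)))
          (S ×ˢ Finset.univ) := by
        rw [Finset.disjoint_left]
        rintro ⟨k, i⟩ h1 h2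
        rw [Finset.mem_product] at h1 h2
        rw [Finset.mem_singleton] at h1
        exact hj (h1.1 ▸ h2.1)
      have base := hindep.indepFun_finset _ _ hdisj hZm
      have mj : ∀ i : Fin 4, ((j, i) : (Finset.Icc a b) × Fin 4) ∈
          ({j} : Finset (Finset.Icc a b)) ×ˢ (Finset.univ : Finset (Fin 4)) :=
        fun i => Finset.mem_product.mpr ⟨Finset.mem_singleton_self j, Finset.mem_univ i⟩
      have mS : ∀ (k : {x // x ∈ S}) (i : Fin 4), (((k:Finset.Icc a b), i)) ∈
          S ×ˢ (Finset.univ : Finset (Fin 4)) :=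
        fun k i => Finset.mem_product.mpr ⟨k.2, Finset.mem_univ i⟩
      set g1 : ((({j} : Finset (Finset.Icc a b)) ×ˢ (Finset.univ : Finset (Fin 4))) → ℝ) → ℝ :=
        fun v => v ⟨(j,0), mj 0⟩ * v ⟨(j,2), mj 2⟩ - v ⟨(j,1), mj 1⟩ * v ⟨(j,3), mj 3⟩ with hg1
      set g2 : ((S ×ˢ (Finset.univ : Finset (Fin 4))) → ℝ) → ℝ :=
        fun v => ∑ k ∈ S.attach,
          (v ⟨((k:Finset.Icc a b),0), mS k 0⟩ * v ⟨((k:Finset.Icc a b),2), mS k 2⟩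
            - v ⟨((k:Finset.Icc a b),1), mS k 1⟩ * v ⟨((k:Finset.Icc a b),3), mS k 3⟩) with hg2
      have hg1m : Measurable g1 := by fun_prop
      have hg2m : Measurable g2 := by
        apply Finset.measurable_sum
        intro k _
        fun_prop
      have hcomp := base.comp hg1m hg2m
      have e2 : (g2 ∘ fun ω (p : (S ×ˢ (Finset.univ : Finset (Fin 4)))) =>
          ![H, H', X, X'] (p:(Finset.Icc a b) × Fin 4).2 ((p:(Finset.Icc a b) × Fin 4).1 : ℤ) ω)
          = fun ω => ∑ k ∈ S, F k ω := by
        funext ω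
        exact Finset.sum_attach S (fun k => F k ω)
      have hind : IndepFun (F j) (fun ω => ∑ k ∈ S, F k ω) ℙ := by
        rw [← e2]
        exact hcomp
      -- split the exponential
      have hsplit : ∀ ω, Complex.exp (Complex.I * t * ((∑ k ∈ insert j S, F k ω : ℝ) : ℂ))
          = (fun x : ℝ => Complex.exp (Complex.I * t * (x : ℂ))) (F j ω) *
            (fun x : ℝ => Complex.exp (Complex.I * t * (x : ℂ))) (∑ k ∈ S, F k ω) := by
        intro ω
        simp only [← Complex.exp_add, Finset.sum_insert hj]
        congr 1
        push_cast
        ring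
      simp_rw [hsplit]
      have h0 := indep_integral_mul_comp (hFm j) hgm hind
        (φ := fun x : ℝ => Complex.exp (Complex.I * t * (x : ℂ)))
        (ψ := fun x : ℝ => Complex.exp (Complex.I * t * (x : ℂ)))
        (by fun_prop) (by fun_prop)
      rw [h0, hfac j, ih, Finset.prod_insert hj, ← Complex.ofReal_mul]
  have hsum : ∀ ω : Ω, (∑ k ∈ Finset.Icc a b, (H k ω * X k ω - H' k ω * X' k ω))
      = ∑ k : (Finset.Icc a b), F k ω :=
    fun ω => (Finset.sum_coe_sort (Finset.Icc a b) (fun k => H k ω * X k ω - H' k ω * X' k ω)).symm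
  simp_rw [hsum]
  rw [key Finset.univ]
  congr 1
  exact Finset.prod_coe_sort (Finset.Icc a b) (fun k => (1 + σh k ^ 2 * σx ^ 2 * t ^ 2 / 4)⁻¹)
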